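/- arXiv:math/0401149 — 2 statements merged into one kernel-verified Lean document; each statement's English description precedes it below -/
import Mathlib

section
/- Let K be a compact subset of ℝ (d = 1) supporting a non-atomic finite measure μ that is absolutely α-decaying (doubling not assumed). If ψ : ℝ⁺ → ℝ⁺ is decreasing and ∑_{r=1}^∞ r^{2α − 1} ψ(r)^α < ∞, then μ(K ∩ W(ψ)) = 0, where W(ψ) = {x ∈ ℝ : |x − p/q| ≤ ψ(q) for infinitely many rationals p/q}. -/
open MeasureTheory Metric Set Filter
open scoped ENNReal

noncomputable section

/-- The set of psi-well approximable real numbers (d = 1). -/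
def WellApprox1 (ψ : ℝ → ℝ) : Set ℝ :=
  {x | {pq : ℤ × ℕ | 0 < pq.2 ∧
      |x - (pq.1 : ℝ) / (pq.2 : ℝ)| ≤ ψ (pq.2 : ℝ)}.Infinite}

/-- In dimension one a hyperplane is a point, so absolutely α-decaying reads:
μ(B(x,r) ∩ B(a,ε)) ≤ C (ε/r)^α μ(B(x,r)). -/
def IsAbsolutelyDecaying1 (K : Set ℝ) (μ : Measure ℝ) (C α r₀ : ℝ) : Prop :=
  ∀ a : ℝ, ∀ ε : ℝ, 0 < ε → ∀ x ∈ K, ∀ r : ℝ, 0 < r → r < r₀ →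
    μ (ball x r ∩ ball a ε) ≤ ENNReal.ofReal (C * (ε / r) ^ α) * μ (ball x r)

def myEt (ψ : ℝ → ℝ) (t : ℕ) : Set ℝ :=
  {x | ∃ p : ℤ, ∃ q : ℕ, 2^t ≤ q ∧ q < 2^(t+1) ∧ |x - (p:ℝ)/(q:ℝ)| ≤ ψ (q:ℝ)}

lemma condensation (ψ : ℝ → ℝ) (α : ℝ) (hα : 0 < α)
    (hpos : ∀ r : ℝ, 0 < r → 0 < ψ r)
    (hmono : ∀ x y : ℝ, 0 < x → x ≤ y → ψ y ≤ ψ x)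
    (hsum : Summable fun n : ℕ =>
      ((n : ℝ) + 1) ^ (2 * α - 1) * ψ ((n : ℝ) + 1) ^ α) :
    Summable (fun t : ℕ => ((2:ℝ) ^ (2*t) * ψ ((2:ℝ) ^ t)) ^ α) := by
  have h2 : (0:ℝ) < 2 := two_pos
  set β := 2*α - 1 with hβ
  set a : ℕ → ℝ := fun q => (q:ℝ) ^ β * ψ (q:ℝ) ^ α with ha
  have hsum' : Summable (fun n : ℕ => a (n+1)) := by
    have : (fun n : ℕ => a (n+1)) =
        fun n : ℕ => ((n : ℝ) + 1) ^ (2 * α - 1) * ψ ((n : ℝ) + 1) ^ α := by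
      funext n; simp only [ha, ← hβ]; push_cast; ring_nf
    rw [this]; exact hsum
  have hanonneg : ∀ n : ℕ, 0 ≤ a (n+1) := by
    intro n
    have h1 : (0:ℝ) < ψ ((n:ℝ)+1) := hpos _ (by positivity)
    simp only [ha]
    push_cast
    positivity
  set m := min 1 ((2:ℝ) ^ (-β)) with hm
  have hm0 : 0 < m := lt_min one_pos (Real.rpow_pos_of_pos h2 _)
  -- base bound
  have hbase : ∀ t q : ℕ, 2^t ≤ q → q < 2^(t+1) →
      ((2:ℝ)^(t+1)) ^ β * m ≤ (q:ℝ) ^ β := by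
    intro t q hq1 hq2
    have hq0 : 0 < q := lt_of_lt_of_le (pow_pos two_pos t) hq1
    have hq0' : (0:ℝ) < q := by exact_mod_cast hq0
    have hq1' : (2:ℝ)^t ≤ (q:ℝ) := by exact_mod_cast hq1
    have hq2' : (q:ℝ) ≤ (2:ℝ)^(t+1) := le_of_lt (by exact_mod_cast hq2)
    rcases le_or_gt 0 β with hb | hb
    · calc ((2:ℝ)^(t+1)) ^ β * m ≤ ((2:ℝ)^(t+1)) ^ β * (2:ℝ)^(-β) :=
            mul_le_mul_of_nonneg_left (min_le_right _ _) (Real.rpow_nonneg (by positivity) _)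
        _ = ((2:ℝ)^t) ^ β := by
            rw [← Real.rpow_natCast 2 (t+1), ← Real.rpow_natCast 2 t,
              ← Real.rpow_mul h2.le, ← Real.rpow_mul h2.le, ← Real.rpow_add h2]
            congr 1; push_cast; ring
        _ ≤ (q:ℝ) ^ β := Real.rpow_le_rpow (by positivity) hq1' hb
    · calc ((2:ℝ)^(t+1)) ^ β * m ≤ ((2:ℝ)^(t+1)) ^ β * 1 :=
            mul_le_mul_of_nonneg_left (min_le_left _ _) (Real.rpow_nonneg (by positivity) _)
        _ = ((2:ℝ)^(t+1)) ^ β := mul_one _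
        _ ≤ (q:ℝ) ^ β := Real.rpow_le_rpow_of_nonpos hq0' hq2' hb.le
  -- block bound
  have hblock : ∀ t : ℕ, ((2:ℝ)^(2*(t+1)) * ψ ((2:ℝ)^(t+1))) ^ α ≤
      (2/m) * ∑ q ∈ Finset.Ico (2^t) (2^(t+1)), a q := by
    intro t
    have hψt : 0 < ψ ((2:ℝ)^(t+1)) := hpos _ (by positivity)
    have hterm : ∀ q ∈ Finset.Ico (2^t) (2^(t+1)),
        ((2:ℝ)^(t+1))^β * m * ψ ((2:ℝ)^(t+1))^α ≤ a q := by
      intro q hq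
      rw [Finset.mem_Ico] at hq
      have h1 := hbase t q hq.1 hq.2
      have hq0 : 0 < q := lt_of_lt_of_le (pow_pos two_pos t) hq.1
      have hψq : ψ ((2:ℝ)^(t+1)) ≤ ψ (q:ℝ) :=
        hmono _ _ (by exact_mod_cast hq0) (le_of_lt (by exact_mod_cast hq.2))
      have h3 : ψ ((2:ℝ)^(t+1))^α ≤ ψ (q:ℝ)^α :=
        Real.rpow_le_rpow hψt.le hψq hα.le
      exact mul_le_mul h1 h3 (Real.rpow_nonneg hψt.le _) (Real.rpow_nonneg (by positivity) _)
    have hcard : (Finset.Ico (2^t) (2^(t+1))).card = 2^t := by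
      rw [Nat.card_Ico]; rw [pow_succ]; omega
    have hsum_ge : (2^t : ℝ) * (((2:ℝ)^(t+1))^β * m * ψ ((2:ℝ)^(t+1))^α) ≤
        ∑ q ∈ Finset.Ico (2^t) (2^(t+1)), a q := by
      have := Finset.card_nsmul_le_sum (Finset.Ico (2^t) (2^(t+1)))
        a (((2:ℝ)^(t+1))^β * m * ψ ((2:ℝ)^(t+1))^α) hterm
      rw [hcard, nsmul_eq_mul] at this
      exact_mod_cast this
    have hLHS : ((2:ℝ)^(2*(t+1)) * ψ ((2:ℝ)^(t+1))) ^ α =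
        (2/m) * ((2^t : ℝ) * (((2:ℝ)^(t+1))^β * m * ψ ((2:ℝ)^(t+1))^α)) := by
      rw [Real.mul_rpow (by positivity) hψt.le]
      have key : ((2:ℝ)^(2*(t+1))) ^ α = 2 * (2^t:ℝ) * ((2:ℝ)^(t+1))^β := by
        rw [← Real.rpow_natCast 2 (2*(t+1)), ← Real.rpow_natCast 2 (t+1),
          ← Real.rpow_natCast 2 t, ← Real.rpow_mul h2.le, ← Real.rpow_mul h2.le]
        rw [mul_assoc, ← Real.rpow_add h2]
        rw [show (2:ℝ) * 2^(((t:ℕ):ℝ) + (((t+1:ℕ)):ℝ) * β) =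
            2^(1 + (((t:ℕ):ℝ) + (((t+1:ℕ)):ℝ) * β)) from by
          rw [show (1:ℝ) + (((t:ℕ):ℝ) + (((t+1:ℕ)):ℝ) * β) =
              (((t:ℕ):ℝ) + (((t+1:ℕ)):ℝ) * β) + 1 from by ring,
            Real.rpow_add_one (by norm_num : (2:ℝ) ≠ 0)]
          ring]
        rw [hβ]; congr 1; push_cast; ring
      rw [key]
      have hmne : m ≠ 0 := ne_of_gt hm0
      field_simp
    rw [hLHS]
    apply mul_le_mul_of_nonneg_left hsum_ge (by positivity)
  -- block union identity
  have blockunion : ∀ T : ℕ, ∑ t ∈ Finset.range T, ∑ q ∈ Finset.Ico (2^t) (2^(t+1)), a q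
      = ∑ q ∈ Finset.Ico 1 (2^T), a q := by
    intro T
    induction T with
    | zero => simp
    | succ n ih =>
        rw [Finset.sum_range_succ, ih,
          Finset.sum_Ico_consecutive a Nat.one_le_two_pow
            (Nat.pow_le_pow_right (by norm_num) (Nat.le_succ n))]
  -- partial sums bounded
  have hpartial : ∀ T : ℕ, ∑ t ∈ Finset.range T,
      ((2:ℝ)^(2*(t+1)) * ψ ((2:ℝ)^(t+1)))^α ≤ (2/m) * (∑' n, a (n+1)) := by
    intro T
    calc ∑ t ∈ Finset.range T, ((2:ℝ)^(2*(t+1)) * ψ ((2:ℝ)^(t+1)))^α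
        ≤ ∑ t ∈ Finset.range T, (2/m) * ∑ q ∈ Finset.Ico (2^t) (2^(t+1)), a q :=
          Finset.sum_le_sum (fun t _ => hblock t)
      _ = (2/m) * ∑ q ∈ Finset.Ico 1 (2^T), a q := by
          rw [← Finset.mul_sum, blockunion T]
      _ ≤ (2/m) * (∑' n, a (n+1)) := by
          apply mul_le_mul_of_nonneg_left _ (by positivity)
          rw [Finset.sum_Ico_eq_sum_range]
          have : ∀ i, a (1 + i) = a (i + 1) := fun i => by rw [add_comm]
          simp only [this]
          exact Summable.sum_le_tsum (Finset.range (2^T - 1)) (fun i _ => hanonneg i) hsum'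
  have hsumshift : Summable (fun t : ℕ => ((2:ℝ) ^ (2*(t+1)) * ψ ((2:ℝ) ^ (t+1))) ^ α) := by
    apply summable_of_sum_range_le (c := (2/m) * (∑' n, a (n+1)))
    · intro t
      have : 0 < ψ ((2:ℝ)^(t+1)) := hpos _ (by positivity)
      positivity
    · exact hpartial
  exact (summable_nat_add_iff 1).mp hsumshift

lemma rat_sep (Q : ℕ) (p p' : ℤ) (q q' : ℕ)
    (hq : 0 < q) (hq' : 0 < q') (hqQ : q ≤ Q) (hq'Q : q' ≤ Q)
    (hne : (p : ℝ) / q ≠ (p' : ℝ) / q') :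
    1 / (Q : ℝ) ^ 2 ≤ |(p : ℝ) / q - (p' : ℝ) / q'| := by
  have hq0 : (0:ℝ) < q := by exact_mod_cast hq
  have hq'0 : (0:ℝ) < q' := by exact_mod_cast hq'
  have hQ0 : (0:ℝ) < Q := lt_of_lt_of_le hq0 (by exact_mod_cast hqQ)
  have key : (p : ℝ) / q - (p' : ℝ) / q' = ((p * q' - p' * q : ℤ) : ℝ) / ((q : ℝ) * q') := by
    push_cast; field_simp
  have hnum : (p * q' - p' * q : ℤ) ≠ 0 := by
    intro h
    apply hne
    have h0 : ((p * q' - p' * q : ℤ) : ℝ) = 0 := by exact_mod_cast h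
    have h2 : (p : ℝ) / q - (p' : ℝ) / q' = 0 := by rw [key, h0, zero_div]
    linarith [sub_eq_zero.mp h2]
  have h1 : (1:ℝ) ≤ |((p * q' - p' * q : ℤ) : ℝ)| := by
    rw [← Int.cast_abs]
    exact_mod_cast Int.one_le_abs hnum
  rw [key, abs_div, abs_of_pos (mul_pos hq0 hq'0)]
  rw [div_le_div_iff₀ (by positivity) (mul_pos hq0 hq'0)]
  have h2 : (q : ℝ) * q' ≤ (Q:ℝ)^2 := by
    have e1 : (q:ℝ) ≤ Q := by exact_mod_cast hqQ
    have e2 : (q':ℝ) ≤ Q := by exact_mod_cast hq'Q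
    nlinarith
  nlinarith [abs_nonneg ((p * q' - p' * q : ℤ) : ℝ)]

lemma mem_myI {δ : ℝ} (hδ : 0 < δ) (x : ℝ) :
    x ∈ Ico ((⌊x/δ⌋ : ℝ) * δ) ((⌊x/δ⌋ + 1 : ℝ) * δ) := by
  constructor
  · have := Int.floor_le (x/δ)
    calc (⌊x/δ⌋ : ℝ) * δ ≤ (x/δ) * δ := by nlinarith
    _ = x := by field_simp
  · have := Int.lt_floor_add_one (x/δ)
    calc x = (x/δ) * δ := by field_simp
    _ < (⌊x/δ⌋ + 1 : ℝ) * δ := by nlinarith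

lemma myI_eq {δ : ℝ} (hδ : 0 < δ) {x : ℝ} {j : ℤ}
    (h : x ∈ Ico ((j : ℝ) * δ) ((j + 1 : ℝ) * δ)) : j = ⌊x/δ⌋ := by
  obtain ⟨h1, h2⟩ := h
  symm
  rw [Int.floor_eq_iff]
  exact ⟨by rw [le_div_iff₀ hδ]; exact h1, by rw [div_lt_iff₀ hδ]; push_cast; linarith⟩

lemma myI_disj {δ : ℝ} (hδ : 0 < δ) {a b : ℤ} (hab : a ≠ b) :
    Disjoint (Ico ((a : ℝ) * δ) ((a + 1 : ℝ) * δ)) (Ico ((b : ℝ) * δ) ((b + 1 : ℝ) * δ)) := by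
  rw [Set.disjoint_left]
  intro x hx hx'
  exact hab ((myI_eq hδ hx).trans (myI_eq hδ hx').symm)

lemma keyest (K : Set ℝ) (μ : Measure ℝ) [IsFiniteMeasure μ]
    (C α r₀ : ℝ) (hα : 0 < α)
    (hdec : IsAbsolutelyDecaying1 K μ C α r₀)
    (ψ : ℝ → ℝ) (hpos : ∀ r : ℝ, 0 < r → 0 < ψ r)
    (hmono : ∀ x y : ℝ, 0 < x → x ≤ y → ψ y ≤ ψ x)
    (M : ℝ) (hM0 : 0 ≤ M) (hM : K ⊆ closedBall 0 M)
    (t : ℕ)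
    (hsmall : (2:ℝ)^(2*t) * ψ ((2:ℝ)^t) ≤ 1/16)
    (hrt : 1/(16*(2:ℝ)^(2*t)) < r₀) :
    μ (K ∩ myEt ψ t) ≤
      ENNReal.ofReal (C * (32 * ((2:ℝ)^(2*t) * ψ ((2:ℝ)^t)))^α) * (5 * μ univ) := by
  set P : ℝ := (2:ℝ)^t with hP
  have hPpos : 0 < P := by positivity
  have hP2 : (2:ℝ)^(2*t) = P^2 := by rw [hP, ← pow_mul, mul_comm]
  have hψP : 0 < ψ P := hpos P hPpos
  set δ : ℝ := 1/(32*P^2) with hδdef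
  have hδ : 0 < δ := by positivity
  set ε : ℝ := 2 * ψ P with hεdef
  have hε : 0 < ε := by positivity
  set I : ℤ → Set ℝ := fun j => Ico ((j : ℝ) * δ) ((j + 1 : ℝ) * δ) with hI
  set c : ℝ≥0∞ := ENNReal.ofReal (C * (32 * ((2:ℝ)^(2*t) * ψ ((2:ℝ)^t)))^α) with hc
  set n : ℕ := ⌈M/δ⌉₊ + 1 with hn
  set J : Finset ℤ := Finset.Icc (-(n:ℤ)) (n:ℤ) with hJ
  have hψsmall : ψ P ≤ 1/(16*P^2) := by
    rw [hP2] at hsmall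
    rw [le_div_iff₀ (by positivity)]
    nlinarith
  -- cover
  have cover : K ∩ myEt ψ t ⊆ ⋃ j ∈ J, (K ∩ I j ∩ myEt ψ t) := by
    intro x hx
    have hxM : |x| ≤ M := by
      have := hM hx.1
      rwa [mem_closedBall, Real.dist_eq, sub_zero] at this
    have hxM' := abs_le.mp hxM
    refine Set.mem_iUnion₂.mpr ⟨⌊x/δ⌋, ?_, ⟨⟨hx.1, mem_myI hδ x⟩, hx.2⟩⟩
    rw [hJ, Finset.mem_Icc]
    have hdivM : x/δ ≤ M/δ := by gcongr; exact hxM'.2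
    have hdivm : (-M)/δ ≤ x/δ := by gcongr; exact hxM'.1
    have hMn : M/δ ≤ (⌈M/δ⌉₊:ℝ) + 1 := by linarith [Nat.le_ceil (M/δ)]
    constructor
    · rw [Int.le_floor, hn]; push_cast
      rw [neg_div] at hdivm
      linarith
    · have h1 : (⌊x/δ⌋:ℝ) ≤ ((n:ℤ):ℝ) := by
        rw [hn]; push_cast
        linarith [Int.floor_le (x/δ)]
      exact_mod_cast h1
  -- per-interval bound
  have perj : ∀ j : ℤ, μ (K ∩ I j ∩ myEt ψ t) ≤
      c * ∑ k ∈ Finset.Icc (-2:ℤ) 2, μ (I (j+k)) := by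
    intro j
    by_cases hne : (K ∩ I j ∩ myEt ψ t).Nonempty
    · obtain ⟨y, hy⟩ := hne
      obtain ⟨p, q, hq1, hq2, hyq⟩ := hy.2
      have hq0 : 0 < q := lt_of_lt_of_le (pow_pos two_pos t) hq1
      set a : ℝ := (p:ℝ)/(q:ℝ) with hadef
      have hP2pos : (0:ℝ) < P^2 := by positivity
      have hPq : P ≤ (q:ℝ) := by rw [hP]; exact_mod_cast hq1
      have hψq : ψ (q:ℝ) ≤ ψ P := hmono P (q:ℝ) hPpos hPq
      have hya : |y - a| ≤ ψ P := le_trans hyq hψq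
      -- the key inclusion
      have sub : K ∩ I j ∩ myEt ψ t ⊆ ball y (2*δ) ∩ ball a ε := by
        intro z hz
        obtain ⟨p', q', hq1', hq2', hzq⟩ := hz.2
        have hq0' : 0 < q' := lt_of_lt_of_le (pow_pos two_pos t) hq1'
        set a' : ℝ := (p':ℝ)/(q':ℝ) with ha'def
        have hPq' : P ≤ (q':ℝ) := by rw [hP]; exact_mod_cast hq1'
        have hza' : |z - a'| ≤ ψ P := le_trans hzq (hmono P (q':ℝ) hPpos hPq')
        have hzy : |z - y| < δ := by
          have h1 := hz.1.2
          have h2 := hy.1.2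
          rw [hI, mem_Ico] at h1 h2
          rw [abs_lt]; constructor <;> [linarith [h1.1, h2.2]; linarith [h1.2, h2.1]]
        have haa' : a = a' := by
          by_contra hne'
          have hsep := rat_sep (2^(t+1)) p p' q q' hq0 hq0'
            (le_of_lt hq2) (le_of_lt hq2') hne'
          have hQcast : ((2^(t+1) : ℕ):ℝ)^2 = 4*P^2 := by
            push_cast
            rw [hP]; ring
          rw [hQcast] at hsep
          have htri : |a - a'| ≤ ψ P + δ + ψ P := by
            have e : a - a' = (a - y) + (y - z) + (z - a') := by ring
            rw [e]
            calc |(a - y) + (y - z) + (z - a')| ≤ |(a-y)+(y-z)| + |z - a'| := abs_add_le _ _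
              _ ≤ |a - y| + |y - z| + |z - a'| := by linarith [abs_add_le (a-y) (y-z)]
              _ ≤ ψ P + δ + ψ P := by
                  rw [abs_sub_comm a y, abs_sub_comm y z]
                  linarith [hya, le_of_lt hzy, hza']
          have e1 : (1:ℝ)/(16*P^2) = 2*(1/(32*P^2)) := by ring
          have e2 : (1:ℝ)/(4*P^2) = 8*(1/(32*P^2)) := by ring
          have hδpos' : (0:ℝ) < 1/(32*P^2) := by positivity
          rw [hδdef] at htri
          rw [e1] at hψsmall
          rw [e2] at hsep
          linarith
        constructor
        · rw [mem_ball, Real.dist_eq]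
          linarith [hzy, hδ]
        · rw [mem_ball, Real.dist_eq, haa']
          calc |z - a'| ≤ ψ P := hza'
            _ < ε := by rw [hεdef]; linarith
      -- apply decaying
      have h2δ : 2*δ = 1/(16*P^2) := by rw [hδdef]; ring
      have hdecay := hdec a ε hε y hy.1.1 (2*δ) (by positivity)
        (by rw [hP2] at hrt; rw [h2δ]; exact hrt)
      have hεδ : ε/(2*δ) = 32 * ((2:ℝ)^(2*t) * ψ ((2:ℝ)^t)) := by
        rw [hεdef, h2δ, hP2, ← hP]
        field_simp
        ring
      have hball : ball y (2*δ) ⊆ ⋃ k ∈ Finset.Icc (-2:ℤ) 2, I (j+k) := by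
        intro w hw
        rw [mem_ball, Real.dist_eq, abs_lt] at hw
        have hyj := hy.1.2
        rw [hI, mem_Ico] at hyj
        refine Set.mem_iUnion₂.mpr ⟨⌊w/δ⌋ - j, ?_, ?_⟩
        · have hlow : (j:ℤ) - 2 ≤ ⌊w/δ⌋ := by
            rw [Int.le_floor, le_div_iff₀ hδ]
            push_cast
            nlinarith [hw.1, hyj.1]
          have hhigh : ⌊w/δ⌋ < (j:ℤ) + 3 := by
            rw [Int.floor_lt, div_lt_iff₀ hδ]
            push_cast
            nlinarith [hw.2, hyj.2]
          rw [Finset.mem_Icc]; omega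
        · have he : j + (⌊w/δ⌋ - j) = ⌊w/δ⌋ := by ring
          rw [he]
          exact mem_myI hδ w
      calc μ (K ∩ I j ∩ myEt ψ t) ≤ μ (ball y (2*δ) ∩ ball a ε) := measure_mono sub
        _ ≤ ENNReal.ofReal (C * (ε/(2*δ))^α) * μ (ball y (2*δ)) := hdecay
        _ = c * μ (ball y (2*δ)) := by rw [hc, hεδ]
        _ ≤ c * ∑ k ∈ Finset.Icc (-2:ℤ) 2, μ (I (j+k)) := by
            apply mul_le_mul_right
            calc μ (ball y (2*δ)) ≤ μ (⋃ k ∈ Finset.Icc (-2:ℤ) 2, I (j+k)) :=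
                  measure_mono hball
              _ ≤ ∑ k ∈ Finset.Icc (-2:ℤ) 2, μ (I (j+k)) := measure_biUnion_finset_le _ _
    · rw [Set.not_nonempty_iff_eq_empty] at hne
      rw [hne, measure_empty]
      exact zero_le'
  -- row bound
  have rowbound : ∀ k : ℤ, ∑ j ∈ J, μ (I (j+k)) ≤ μ univ := by
    intro k
    have hd : (↑J : Set ℤ).PairwiseDisjoint (fun j => I (j+k)) := by
      intro j₁ _ j₂ _ hne
      simp only [hI]
      exact myI_disj hδ (by omega)
    have heq := measure_biUnion_finset (μ := μ) hd
      (fun j _ => by simp only [hI]; exact measurableSet_Ico)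
    rw [← heq]
    exact measure_mono (subset_univ _)
  calc μ (K ∩ myEt ψ t) ≤ μ (⋃ j ∈ J, (K ∩ I j ∩ myEt ψ t)) := measure_mono cover
    _ ≤ ∑ j ∈ J, μ (K ∩ I j ∩ myEt ψ t) := measure_biUnion_finset_le _ _
    _ ≤ ∑ j ∈ J, c * ∑ k ∈ Finset.Icc (-2:ℤ) 2, μ (I (j+k)) :=
        Finset.sum_le_sum (fun j _ => perj j)
    _ = c * ∑ k ∈ Finset.Icc (-2:ℤ) 2, ∑ j ∈ J, μ (I (j+k)) := by
        rw [← Finset.mul_sum, Finset.sum_comm]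
    _ ≤ c * ∑ k ∈ Finset.Icc (-2:ℤ) 2, μ univ :=
        mul_le_mul_right (Finset.sum_le_sum (fun k _ => rowbound k)) c
    _ = c * (5 * μ univ) := by
        rw [Finset.sum_const, show (Finset.Icc (-2:ℤ) 2).card = 5 from rfl]
        rw [nsmul_eq_mul]
        norm_num

lemma wa_exists_block (ψ : ℝ → ℝ) (hmono : ∀ x y : ℝ, 0 < x → x ≤ y → ψ y ≤ ψ x)
    {x : ℝ} (hx : x ∈ WellApprox1 ψ) (T : ℕ) : ∃ t, T ≤ t ∧ x ∈ myEt ψ t := by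
  have hx' : {pq : ℤ × ℕ | 0 < pq.2 ∧
      |x - (pq.1 : ℝ) / (pq.2 : ℝ)| ≤ ψ (pq.2 : ℝ)}.Infinite := hx
  set S := {pq : ℤ × ℕ | 0 < pq.2 ∧
      |x - (pq.1 : ℝ) / (pq.2 : ℝ)| ≤ ψ (pq.2 : ℝ)} with hS
  have hclaim : ∃ pq ∈ S, 2^T ≤ pq.2 := by
    by_contra hcon
    push_neg at hcon
    apply hx'
    set B : ℤ := ⌈(2^T : ℝ) * (|x| + ψ 1)⌉ with hB
    apply Set.Finite.subset (Set.Finite.prod (Set.finite_Icc (-B) B)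
      (Set.finite_Icc 0 (2^T)))
    rintro ⟨p, q⟩ hpq
    obtain ⟨hq0, hxq⟩ := hpq
    have hqT : q < 2^T := hcon (p, q) ⟨hq0, hxq⟩
    have hq0' : (0:ℝ) < q := by exact_mod_cast hq0
    have hq1 : (1:ℝ) ≤ q := by exact_mod_cast hq0
    have hqT' : (q:ℝ) ≤ 2^T := by
      have : (q:ℝ) ≤ ((2^T : ℕ):ℝ) := by exact_mod_cast le_of_lt hqT
      rwa [Nat.cast_pow, Nat.cast_ofNat] at this
    have hψq : ψ (q:ℝ) ≤ ψ 1 := hmono 1 (q:ℝ) one_pos hq1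
    have hψq0 : 0 ≤ ψ (q:ℝ) := le_trans (abs_nonneg _) hxq
    have hpbound : |(p:ℝ)| ≤ (2^T : ℝ) * (|x| + ψ 1) := by
      have h1 : |(p:ℝ)/(q:ℝ)| ≤ |x| + ψ (q:ℝ) := by
        calc |(p:ℝ)/(q:ℝ)| = |x - (x - (p:ℝ)/(q:ℝ))| := by ring_nf
          _ ≤ |x| + |x - (p:ℝ)/(q:ℝ)| := abs_sub _ _
          _ ≤ |x| + ψ (q:ℝ) := by linarith
      have h2 : |(p:ℝ)| = |(p:ℝ)/(q:ℝ)| * q := by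
        rw [abs_div, abs_of_pos hq0']
        field_simp
      rw [h2]
      calc |(p:ℝ)/(q:ℝ)| * q ≤ (|x| + ψ (q:ℝ)) * q :=
            mul_le_mul_of_nonneg_right h1 hq0'.le
        _ ≤ (|x| + ψ 1) * (2^T : ℝ) := by
            apply mul_le_mul (by linarith) hqT' hq0'.le
            have : (0:ℝ) ≤ |x| + ψ (q:ℝ) := by positivity
            linarith
        _ = (2^T : ℝ) * (|x| + ψ 1) := by ring
    constructor
    · simp only [Set.mem_Icc]
      have h3 : |(p:ℝ)| ≤ (B:ℝ) := le_trans hpbound (Int.le_ceil _)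
      have h4 := abs_le.mp h3
      constructor
      · exact_mod_cast h4.1
      · exact_mod_cast h4.2
    · simp only [Set.mem_Icc]
      omega
  obtain ⟨⟨p, q⟩, hpq, hq2T⟩ := hclaim
  have hq0 : 0 < q := hpq.1
  set t := Nat.log 2 q with ht
  have h1 : 2^t ≤ q := Nat.pow_log_le_self 2 (Nat.pos_iff_ne_zero.mp hq0)
  have h2 : q < 2^(t+1) := Nat.lt_pow_succ_log_self (by norm_num) q
  have hTt : T ≤ t := by
    by_contra h
    push_neg at h
    have : q < 2^T := lt_of_lt_of_le h2 (Nat.pow_le_pow_right (by norm_num) (by omega))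
    omega
  exact ⟨t, hTt, ⟨p, q, h1, h2, hpq.2⟩⟩

/-- The d = 1 case without assuming doubling: if μ is absolutely α-decaying and
∑ r^{2α-1} ψ(r)^α < ∞ then μ(K ∩ W(ψ)) = 0. -/
theorem stmt_4 (K : Set ℝ) (hK : IsCompact K) (μ : Measure ℝ) [IsFiniteMeasure μ]
    [NullSingletonClass μ] (hsupp : μ Kᶜ = 0)
    (C α r₀ : ℝ) (hC : 0 < C) (hα : 0 < α) (hr₀ : 0 < r₀)
    (hdec : IsAbsolutelyDecaying1 K μ C α r₀)
    (ψ : ℝ → ℝ) (hpos : ∀ r : ℝ, 0 < r → 0 < ψ r)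
    (hmono : ∀ x y : ℝ, 0 < x → x ≤ y → ψ y ≤ ψ x)
    (hsum : Summable fun n : ℕ =>
      ((n : ℝ) + 1) ^ (2 * α - 1) * ψ ((n : ℝ) + 1) ^ α) :
    μ (K ∩ WellApprox1 ψ) = 0 := by
  obtain ⟨M', hM'⟩ := hK.isBounded.subset_closedBall 0
  have hM : K ⊆ closedBall 0 (max M' 0) :=
    subset_trans hM' (closedBall_subset_closedBall (le_max_left _ _))
  have hM0 : 0 ≤ max M' 0 := le_max_right _ _
  set u : ℕ → ℝ := fun t => (2:ℝ)^(2*t) * ψ ((2:ℝ)^t) with hu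
  have hcond : Summable (fun t : ℕ => u t ^ α) := condensation ψ α hα hpos hmono hsum
  have hu_nonneg : ∀ t, 0 ≤ u t :=
    fun t => le_of_lt (mul_pos (by positivity) (hpos _ (by positivity)))
  have htend : Tendsto (fun t => u t ^ α) atTop (nhds 0) := hcond.tendsto_atTop_zero
  have hev1 : ∀ᶠ t : ℕ in atTop, u t ≤ 1/16 := by
    filter_upwards [htend.eventually_lt_const
      (show (0:ℝ) < (1/16:ℝ)^α by positivity)] with t ht
    by_contra hcon
    push_neg at hcon
    exact absurd (Real.rpow_le_rpow (by norm_num) hcon.le hα.le) (not_le.mpr ht)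
  have hev2 : ∀ᶠ t : ℕ in atTop, 1/(16*(2:ℝ)^(2*t)) < r₀ := by
    have h0 : Tendsto (fun t : ℕ => (2:ℝ)^(2*t)) atTop atTop :=
      tendsto_atTop_mono (fun t => pow_le_pow_right₀ (by norm_num) (by omega))
        (tendsto_pow_atTop_atTop_of_one_lt (by norm_num : (1:ℝ) < 2))
    have h1 : Tendsto (fun t : ℕ => (16:ℝ)*(2:ℝ)^(2*t)) atTop atTop :=
      Tendsto.const_mul_atTop (by norm_num : (0:ℝ) < 16) h0
    have h2 : Tendsto (fun t : ℕ => 1/(16*(2:ℝ)^(2*t))) atTop (nhds 0) := by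
      simpa only [one_div, Pi.inv_def] using h1.inv_tendsto_atTop
    exact h2.eventually_lt_const hr₀
  obtain ⟨T₀, hT₀⟩ := eventually_atTop.mp (hev1.and hev2)
  set f : ℕ → ℝ := fun t => C * (32 * u t)^α with hf
  have hkey : ∀ t, T₀ ≤ t → μ (K ∩ myEt ψ t) ≤ ENNReal.ofReal (f t) * (5 * μ univ) :=
    fun t ht => keyest K μ C α r₀ hα hdec ψ hpos hmono (max M' 0) hM0 hM t
      (hT₀ t ht).1 (hT₀ t ht).2
  have hf_s : Summable f := by
    have he : f = fun t => (C * 32^α) * (u t ^ α) := by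
      funext t
      simp only [hf]
      rw [Real.mul_rpow (by norm_num) (hu_nonneg t)]
      ring
    rw [he]
    exact hcond.mul_left _
  have hf_nn : ∀ t, 0 ≤ f t := fun t =>
    mul_nonneg hC.le (Real.rpow_nonneg (mul_nonneg (by norm_num) (hu_nonneg t)) α)
  have htsum : (∑' t : ℕ, μ (K ∩ myEt ψ t)) ≠ ⊤ := by
    have hb : ∀ t, μ (K ∩ myEt ψ t) ≤
        ENNReal.ofReal (f t) * (5 * μ univ) + (if t < T₀ then μ univ else 0) := by
      intro t
      by_cases h : t < T₀
      · simp only [h, if_true]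
        exact le_add_left (measure_mono (subset_univ _))
      · simp only [h, if_false, add_zero]
        exact hkey t (not_lt.mp h)
    have h1 : (∑' t : ℕ, ENNReal.ofReal (f t) * (5 * μ univ)) ≠ ⊤ := by
      rw [ENNReal.tsum_mul_right, ← ENNReal.ofReal_tsum_of_nonneg hf_nn hf_s]
      exact ENNReal.mul_ne_top ENNReal.ofReal_ne_top
        (ENNReal.mul_ne_top (by norm_num) (measure_ne_top μ univ))
    have h2 : (∑' t : ℕ, (if t < T₀ then μ univ else (0:ℝ≥0∞))) ≠ ⊤ := by
      rw [tsum_eq_sum (s := Finset.range T₀)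
        (fun t ht => if_neg (by simpa using ht))]
      refine (ENNReal.sum_lt_top.mpr (fun t _ => ?_)).ne
      split
      · exact (measure_ne_top μ univ).lt_top
      · simp
    have hle : (∑' t : ℕ, μ (K ∩ myEt ψ t)) ≤
        (∑' t : ℕ, ENNReal.ofReal (f t) * (5 * μ univ)) +
            ∑' t : ℕ, (if t < T₀ then μ univ else (0:ℝ≥0∞)) :=
      le_trans (ENNReal.tsum_le_tsum hb) (le_of_eq ENNReal.tsum_add)
    exact ne_top_of_le_ne_top (ENNReal.add_ne_top.mpr ⟨h1, h2⟩) hle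
  have hBC := measure_limsup_atTop_eq_zero (μ := μ) htsum
  have hincl : K ∩ WellApprox1 ψ ⊆ limsup (fun t => K ∩ myEt ψ t) atTop := by
    intro x hx
    rw [mem_limsup_iff_frequently_mem, frequently_atTop]
    intro T
    obtain ⟨t, hTt, hxt⟩ := wa_exists_block ψ hmono hx.2 T
    exact ⟨t, hTt, hx.1, hxt⟩
  exact le_antisymm (hBC ▸ measure_mono hincl) zero_le'
end
end

section
/- Let μ be a measure on ℝ^d supported on a set K satisfying a·r^δ ≤ μ(B(x,r)) ≤ b·r^δ for all x ∈ K and all r < r₀, where δ > d − 1. Then μ is absolutely α-decaying with α := δ − (d−1) > 0: there is a constant C such that for every (d−1)-dimensional hyperplane L, every ε > 0, every x ∈ K, and every r < r₀, μ(B(x,r) ∩ L^(ε)) ≤ C(ε/r)^α μ(B(x,r)). -/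
open MeasureTheory Metric Set
open scoped ENNReal

noncomputable section

/-- The set of psi-well approximable points in R^d. -/
def WellApprox (d : ℕ) (ψ : ℝ → ℝ) : Set (EuclideanSpace ℝ (Fin d)) :=
  {x | {pq : (Fin d → ℤ) × ℕ | 0 < pq.2 ∧
      ∀ i, |x i - (pq.1 i : ℝ) / (pq.2 : ℝ)| ≤ ψ (pq.2 : ℝ)}.Infinite}

/-- μ is doubling on K with constant D for radii below r₀. -/
def IsDoubling (d : ℕ) (K : Set (EuclideanSpace ℝ (Fin d)))
    (μ : Measure (EuclideanSpace ℝ (Fin d))) (D r₀ : ℝ) : Prop :=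
  ∀ x ∈ K, ∀ r : ℝ, 0 < r → r < r₀ →
    μ (ball x (2 * r)) ≤ ENNReal.ofReal D * μ (ball x r)

/-- μ is absolutely α-decaying on K with constants C, α, r₀. -/
def IsAbsolutelyDecaying (d : ℕ) (K : Set (EuclideanSpace ℝ (Fin d)))
    (μ : Measure (EuclideanSpace ℝ (Fin d))) (C α r₀ : ℝ) : Prop :=
  ∀ L : AffineSubspace ℝ (EuclideanSpace ℝ (Fin d)),
    (L : Set (EuclideanSpace ℝ (Fin d))).Nonempty →
    Module.finrank ℝ L.direction = d - 1 →
    ∀ ε : ℝ, 0 < ε → ∀ x ∈ K, ∀ r : ℝ, 0 < r → r < r₀ →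
      μ (ball x r ∩ Metric.thickening ε (L : Set (EuclideanSpace ℝ (Fin d))))
        ≤ ENNReal.ofReal (C * (ε / r) ^ α) * μ (ball x r)

section Aux
open Module
open scoped ENNReal



lemma exists_onb (d : ℕ) (hd : 0 < d) (n : EuclideanSpace ℝ (Fin d)) (hn : ‖n‖ = 1) :
    ∃ b : OrthonormalBasis (Fin d) ℝ (EuclideanSpace ℝ (Fin d)), b ⟨0, hd⟩ = n := by
  have hcard : finrank ℝ (EuclideanSpace ℝ (Fin d)) = Fintype.card (Fin d) := by
    simp [finrank_euclideanSpace_fin]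
  have horth : Orthonormal ℝ (({⟨0, hd⟩} : Set (Fin d)).restrict (fun _ => n)) := by
    constructor
    · intro i; exact hn
    · intro i j hij
      exact absurd (Subtype.ext ((Set.mem_singleton_iff.1 i.2).trans
        (Set.mem_singleton_iff.1 j.2).symm)) hij
  obtain ⟨b, hb⟩ := Orthonormal.exists_orthonormalBasis_extension_of_card_eq hcard horth
  exact ⟨b, hb _ rfl⟩

lemma count_lemma (d : ℕ) (hd : 0 < d) (n p x : EuclideanSpace ℝ (Fin d)) (hn : ‖n‖ = 1)
    {ε r : ℝ} (hε : 0 < ε) (hεr : ε ≤ r) {M : Set (EuclideanSpace ℝ (Fin d))}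
    (hMball : ∀ m ∈ M, m ∈ ball x r)
    (hMslab : ∀ m ∈ M, |(inner ℝ (m - p) n : ℝ)| < ε)
    (hsep : M.Pairwise fun u v => ε ≤ dist u v) :
    ∃ hfin : M.Finite, (M.ncard : ℝ≥0∞) *
        (ENNReal.ofReal ((ε/2)^d) * volume (ball (0:EuclideanSpace ℝ (Fin d)) 1))
      ≤ ENNReal.ofReal (3*ε) * ENNReal.ofReal (3*r) ^ (d-1) := by
  have hr : 0 < r := lt_of_lt_of_le hε hεr
  -- finiteness
  obtain ⟨t, htfin, htcov⟩ := (Metric.totallyBounded_iff).1 (TotallyBounded.subset ball_subset_closedBall (isCompact_closedBall x r).totallyBounded)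
    (ε/2) (by linarith)
  have hfin : M.Finite := by
    have : M ⊆ ⋃ y ∈ t, (M ∩ ball y (ε/2)) := by
      intro m hm
      obtain ⟨y, hy, hmy⟩ := by simpa using htcov (hMball m hm)
      exact Set.mem_biUnion hy ⟨hm, hmy⟩
    refine Set.Finite.subset (Set.Finite.biUnion htfin fun y _ => ?_) this
    refine Set.Subsingleton.finite fun u hu v hv => ?_
    by_contra huv
    have := hsep hu.1 hv.1 huv
    have : dist u v < ε := by
      calc dist u v ≤ dist u y + dist y v := dist_triangle u y v
        _ < ε/2 + ε/2 := by
            have h1 := mem_ball.1 hu.2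
            have h2 := mem_ball.1 hv.2
            rw [dist_comm y v] at *
            linarith [mem_ball.1 hu.2, mem_ball.1 hv.2]
        _ = ε := by ring
    linarith [hsep hu.1 hv.1 huv]
  refine ⟨hfin, ?_⟩
  set F : Finset (EuclideanSpace ℝ (Fin d)) := hfin.toFinset with hF
  obtain ⟨b, hb0⟩ := exists_onb d hd n hn
  set i₀ : Fin d := ⟨0, hd⟩
  set c : ℝ := (inner ℝ n p : ℝ) with hc
  set B : Fin d → Set ℝ := fun i =>
    if i = i₀ then Ioo (c - 3*ε/2) (c + 3*ε/2)
    else Icc (b.repr x i - 3*r/2) (b.repr x i + 3*r/2) with hB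
  -- balls are contained in the box
  have hsub : ∀ m ∈ M, ball m (ε/2) ⊆ {y : EuclideanSpace ℝ (Fin d) | ∀ i, b.repr y i ∈ B i} := by
    intro m hm y hy i
    have hym : dist y m < ε/2 := mem_ball.1 hy
    by_cases hi : i = i₀
    · subst hi
      have hrepr : b.repr y i₀ = (inner ℝ n y : ℝ) := by
        rw [b.repr_apply_apply, hb0]
      have h1 : |(inner ℝ n (y - m) : ℝ)| ≤ ‖y - m‖ := by
        calc |(inner ℝ n (y - m) : ℝ)| ≤ ‖n‖ * ‖y - m‖ := abs_real_inner_le_norm n (y - m)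
          _ = ‖y - m‖ := by rw [hn, one_mul]
      have h2 : |(inner ℝ n (m - p) : ℝ)| < ε := by
        rw [real_inner_comm]; exact hMslab m hm
      have hyp : |(inner ℝ n y : ℝ) - c| < 3*ε/2 := by
        have : (inner ℝ n y : ℝ) - c = inner ℝ n (y - m) + inner ℝ n (m - p) := by
          rw [hc, inner_sub_right, inner_sub_right]; ring
        rw [this]
        calc |(inner ℝ n (y - m) : ℝ) + inner ℝ n (m - p)| ≤
              |(inner ℝ n (y - m) : ℝ)| + |(inner ℝ n (m - p) : ℝ)| := abs_add_le _ _
          _ < ε/2 + ε := by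
              have := dist_eq_norm y m ▸ hym
              linarith [h1.trans_lt this]
          _ = 3*ε/2 := by ring
      simp only [hB, if_pos rfl, Set.mem_Ioo, hrepr]
      constructor <;> [linarith [abs_lt.1 hyp]; linarith [(abs_lt.1 hyp).2]]
    · have h1 : |b.repr y i - b.repr x i| ≤ 3*r/2 := by
        have : b.repr y i - b.repr x i = (inner ℝ (b i) (y - x) : ℝ) := by
          rw [b.repr_apply_apply, b.repr_apply_apply, inner_sub_right]
        rw [this]
        calc |(inner ℝ (b i) (y - x) : ℝ)| ≤ ‖b i‖ * ‖y - x‖ := abs_real_inner_le_norm _ _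
          _ = ‖y - x‖ := by rw [b.orthonormal.1 i, one_mul]
          _ = dist y x := (dist_eq_norm y x).symm
          _ ≤ dist y m + dist m x := dist_triangle y m x
          _ ≤ 3*r/2 := by
              have := mem_ball.1 (hMball m hm)
              linarith
      simp only [hB, if_neg hi, Set.mem_Icc]
      constructor <;> linarith [abs_le.1 h1]
  -- volume of the box
  have hboxvol : volume {y : EuclideanSpace ℝ (Fin d) | ∀ i, b.repr y i ∈ B i}
      = ENNReal.ofReal (3*ε) * ENNReal.ofReal (3*r) ^ (d-1) := by
    have hmeasB : ∀ i, MeasurableSet (B i) := by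
      intro i
      rw [hB]; dsimp only
      split <;> [exact measurableSet_Ioo; exact measurableSet_Icc]
    have e := EuclideanSpace.volume_preserving_symm_measurableEquiv_toLp (Fin d)
    have h1 : {y : EuclideanSpace ℝ (Fin d) | ∀ i, b.repr y i ∈ B i}
        = b.repr ⁻¹' ((MeasurableEquiv.toLp 2 (Fin d → ℝ)).symm ⁻¹' (Set.univ.pi B)) := by
      ext y; simp [Set.mem_pi]
    rw [h1, (b.measurePreserving_repr).measure_preimage
        ((MeasurableSet.univ_pi fun i => (hmeasB i)).preimage
          (MeasurableEquiv.toLp 2 (Fin d → ℝ)).symm.measurable).nullMeasurableSet,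
      e.measure_preimage (MeasurableSet.univ_pi fun i => hmeasB i).nullMeasurableSet,
      volume_pi_pi]
    have hprod : ∀ i, volume (B i) = if i = i₀ then ENNReal.ofReal (3*ε)
        else ENNReal.ofReal (3*r) := by
      intro i
      rw [hB]; dsimp only
      split
      · rw [Real.volume_Ioo]; congr 1; ring
      · rw [Real.volume_Icc]; congr 1; ring
    calc ∏ i, volume (B i) = ∏ i, (if i = i₀ then ENNReal.ofReal (3*ε)
          else ENNReal.ofReal (3*r)) := Finset.prod_congr rfl (fun i _ => hprod i)
      _ = ENNReal.ofReal (3*ε) * ∏ i ∈ Finset.univ.erase i₀,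
            (if i = i₀ then ENNReal.ofReal (3*ε) else ENNReal.ofReal (3*r)) := by
          rw [← Finset.mul_prod_erase Finset.univ _ (Finset.mem_univ i₀), if_pos rfl]
      _ = ENNReal.ofReal (3*ε) * ENNReal.ofReal (3*r) ^ (d-1) := by
          rw [Finset.prod_congr rfl (fun i hi => if_neg (Finset.ne_of_mem_erase hi)),
            Finset.prod_const, Finset.card_erase_of_mem (Finset.mem_univ i₀),
            Finset.card_univ, Fintype.card_fin]
  -- disjointness and sum
  have hdisj : (↑F : Set (EuclideanSpace ℝ (Fin d))).PairwiseDisjoint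
      (fun m => ball m (ε/2)) := by
    intro u hu v hv huv
    simp only [hF, Set.Finite.coe_toFinset] at hu hv
    refine Set.disjoint_left.2 fun z hzu hzv => ?_
    have : dist u v < ε := by
      calc dist u v ≤ dist u z + dist z v := dist_triangle u z v
        _ < ε/2 + ε/2 := by
            rw [dist_comm u z]
            exact add_lt_add (mem_ball.1 hzu) (mem_ball.1 hzv)
        _ = ε := by ring
    linarith [hsep hu hv huv]
  have hballvol : ∀ m : EuclideanSpace ℝ (Fin d),
      volume (ball m (ε/2)) = ENNReal.ofReal ((ε/2)^d)
        * volume (ball (0:EuclideanSpace ℝ (Fin d)) 1) := by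
    intro m
    rw [Measure.addHaar_ball_of_pos volume m (by linarith : (0:ℝ) < ε/2),
      finrank_euclideanSpace_fin]
  have hcard : M.ncard = F.card := by
    rw [hF, Set.ncard_eq_toFinset_card M hfin]
  calc (M.ncard : ℝ≥0∞) * (ENNReal.ofReal ((ε/2)^d) * volume (ball (0:EuclideanSpace ℝ (Fin d)) 1))
      = ∑ m ∈ F, volume (ball m (ε/2)) := by
        rw [hcard]
        rw [Finset.sum_congr rfl (fun m _ => hballvol m), Finset.sum_const, nsmul_eq_mul]
    _ = volume (⋃ m ∈ F, ball m (ε/2)) :=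
        (measure_biUnion_finset hdisj (fun _ _ => measurableSet_ball)).symm
    _ ≤ volume {y : EuclideanSpace ℝ (Fin d) | ∀ i, b.repr y i ∈ B i} := by
        refine measure_mono (Set.iUnion₂_subset fun m hm => ?_)
        exact hsub m (by simpa [hF] using hm)
    _ = ENNReal.ofReal (3*ε) * ENNReal.ofReal (3*r) ^ (d-1) := hboxvol

lemma arith_lemma (d : ℕ) (hd : 0 < d) (N a b δ ε r Vr : ℝ) (hN : 0 ≤ N) (ha : 0 < a)
    (hb : 0 < b) (hV : 0 < Vr) (hε : 0 < ε) (hεr : ε ≤ r) (hδ : (d:ℝ) - 1 < δ)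
    (hcount : N * ((ε/2)^d * Vr) ≤ 3*ε * (3*r)^(d-1)) :
    N * (b * ε^δ) ≤ ((1 + 3 * 3^(d-1) * 2^d * b / (a * Vr)) * (ε/r)^(δ - ((d:ℝ)-1))) * (a * r^δ) := by
  have hr : 0 < r := lt_of_lt_of_le hε hεr
  set d1 : ℝ := (d:ℝ) - 1 with hd1
  set α : ℝ := δ - d1 with hαdef
  have hα : 0 < α := by simp [hαdef]; linarith
  have hcast : ((d - 1 : ℕ) : ℝ) = d1 := by
    rw [Nat.cast_sub (by omega), Nat.cast_one]
  have e1 : ε^(d:ℕ) = ε * ε ^ d1 := by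
    rw [← Real.rpow_natCast ε d, show (d:ℝ) = 1 + d1 by rw [hd1]; ring,
      Real.rpow_add hε, Real.rpow_one]
  have e2 : r^(d-1:ℕ) = r ^ d1 := by rw [← Real.rpow_natCast r (d-1), hcast]
  have e2' : ε^(d-1:ℕ) = ε ^ d1 := by rw [← Real.rpow_natCast ε (d-1), hcast]
  have e3 : ε^δ = ε^α * ε^d1 := by
    rw [← Real.rpow_add hε]; congr 1; rw [hαdef]; ring
  have e4 : r^δ = r^α * r^d1 := by
    rw [← Real.rpow_add hr]; congr 1; rw [hαdef]; ring
  have e5 : (ε/r)^α = ε^α / r^α := Real.div_rpow hε.le hr.le α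
  set A : ℝ := ε^α with hA
  set Bε : ℝ := ε^d1 with hBe
  set P : ℝ := r^α with hP
  set Q : ℝ := r^d1 with hQ
  have hApos : 0 < A := Real.rpow_pos_of_pos hε α
  have hBpos : 0 < Bε := Real.rpow_pos_of_pos hε d1
  have hPpos : 0 < P := Real.rpow_pos_of_pos hr α
  have hQpos : 0 < Q := Real.rpow_pos_of_pos hr d1
  set c2 : ℝ := (2:ℝ)^d with hc2
  set c3 : ℝ := (3:ℝ)^(d-1:ℕ) with hc3
  have hc2pos : 0 < c2 := by positivity
  have hc3pos : 0 < c3 := by positivity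
  rw [e3, e4, e5]
  have hcount' : N * ((ε * Bε / c2) * Vr) ≤ 3*ε*(c3*Q) := by
    calc N * ((ε * Bε / c2) * Vr) = N * ((ε/2)^d * Vr) := by
          rw [div_pow, e1, hc2]
      _ ≤ 3*ε * (3*r)^(d-1) := hcount
      _ = 3*ε*(c3*Q) := by rw [mul_pow, e2, hc3]
  have hN2 : N * Bε * Vr ≤ 3 * c3 * c2 * Q := by
    have h2 : (N * Bε * Vr) * (ε / c2) ≤ (3 * c3 * c2 * Q) * (ε / c2) := by
      calc (N*Bε*Vr)*(ε/c2) = N * ((ε*Bε/c2)*Vr) := by ring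
        _ ≤ 3*ε*(c3*Q) := hcount'
        _ = (3*c3*c2*Q)*(ε/c2) := by field_simp
    exact le_of_mul_le_mul_right h2 (by positivity)
  have hRHS : ((1 + 3*c3*c2*b/(a*Vr)) * (A/P)) * (a*(P*Q))
      = a*A*Q + 3*c3*c2*b*A*Q/Vr := by field_simp
  rw [hRHS]
  have hmain : N * (b*(A*Bε)) ≤ 3*c3*c2*b*A*Q/Vr := by
    calc N*(b*(A*Bε)) = (N*Bε*Vr)*(b*A/Vr) := by field_simp
      _ ≤ (3*c3*c2*Q)*(b*A/Vr) := by
          apply mul_le_mul_of_nonneg_right hN2 (by positivity)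
      _ = 3*c3*c2*b*A*Q/Vr := by field_simp
  nlinarith [mul_pos (mul_pos ha hApos) hQpos]


end Aux

/-- If a r^δ ≤ μ(B(x,r)) ≤ b r^δ with δ > d - 1, then μ is absolutely
α-decaying with α = δ - (d-1). -/
theorem stmt_8 (d : ℕ) (hd : 0 < d) (K : Set (EuclideanSpace ℝ (Fin d)))
    (μ : Measure (EuclideanSpace ℝ (Fin d))) (hsupp : μ Kᶜ = 0)
    (a b δ r₀ : ℝ) (ha : 0 < a) (hb : 0 < b) (hr₀ : 0 < r₀)
    (hδ : (d : ℝ) - 1 < δ)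
    (hmeas : ∀ x ∈ K, ∀ r : ℝ, 0 < r → r < r₀ →
      ENNReal.ofReal (a * r ^ δ) ≤ μ (ball x r) ∧
        μ (ball x r) ≤ ENNReal.ofReal (b * r ^ δ)) :
    ∃ C : ℝ, 0 < C ∧ IsAbsolutelyDecaying d K μ C (δ - ((d : ℝ) - 1)) r₀ := by
  classical
  set V : ℝ≥0∞ := volume (ball (0:EuclideanSpace ℝ (Fin d)) 1) with hV
  have hVtop : V ≠ ⊤ := measure_ball_lt_top.ne
  have hV0 : V ≠ 0 := (measure_ball_pos volume 0 one_pos).ne'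
  set Vr : ℝ := V.toReal with hVrdef
  have hVr : 0 < Vr := ENNReal.toReal_pos hV0 hVtop
  set α : ℝ := δ - ((d:ℝ) - 1) with hαdef
  have hα : 0 < α := by rw [hαdef]; linarith
  refine ⟨1 + 3 * 3^(d-1) * 2^d * b / (a * Vr), by positivity, ?_⟩
  set C : ℝ := 1 + 3 * 3^(d-1) * 2^d * b / (a * Vr) with hC
  have hC1 : 1 ≤ C := by rw [hC]; have : 0 ≤ 3 * 3^(d-1) * 2^d * b / (a * Vr) := by positivity
                         linarith
  intro L hLne hLrank ε hε x hx r hr hrr₀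
  by_cases hεr : ε ≤ r
  swap
  · -- trivial case ε > r
    push_neg at hεr
    have h1 : (1:ℝ≥0∞) ≤ ENNReal.ofReal (C * (ε / r) ^ α) := by
      rw [ENNReal.one_le_ofReal]
      have h2 : (1:ℝ) ≤ (ε / r) ^ α :=
        Real.one_le_rpow ((one_le_div hr).2 hεr.le) hα.le
      have := mul_le_mul hC1 h2 zero_le_one (le_trans zero_le_one hC1)
      linarith
    calc μ (ball x r ∩ thickening ε (L : Set (EuclideanSpace ℝ (Fin d)))) ≤ μ (ball x r) :=
          measure_mono inter_subset_left
      _ = 1 * μ (ball x r) := (one_mul _).symm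
      _ ≤ ENNReal.ofReal (C * (ε / r) ^ α) * μ (ball x r) := mul_le_mul_left h1 _
  -- main case ε ≤ r
  obtain ⟨p, hp⟩ := hLne
  -- construct a unit normal vector
  set W := L.direction with hW
  have hWne : W ≠ ⊤ := by
    intro h
    have h2 : Module.finrank ℝ W = d := by
      rw [h, finrank_top, finrank_euclideanSpace_fin]
    rw [hLrank] at h2; omega
  have hWbot : Wᗮ ≠ ⊥ := fun h => hWne (Submodule.orthogonal_eq_bot_iff.1 h)
  obtain ⟨v, hvW, hv0⟩ := Submodule.exists_mem_ne_zero_of_ne_bot hWbot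
  set n : EuclideanSpace ℝ (Fin d) := (‖v‖:ℝ)⁻¹ • v with hn'
  have hn : ‖n‖ = 1 := norm_smul_inv_norm hv0
  have hnW : n ∈ Wᗮ := Submodule.smul_mem _ _ hvW
  have hnperp : ∀ w ∈ W, (inner ℝ w n : ℝ) = 0 :=
    (Submodule.mem_orthogonal W n).1 hnW
  -- slab property
  have hslab : ∀ s ∈ thickening ε (L : Set (EuclideanSpace ℝ (Fin d))), |(inner ℝ (s - p) n : ℝ)| < ε := by
    intro s hs
    obtain ⟨z, hzL, hsz⟩ := mem_thickening_iff.1 hs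
    have hzp : z - p ∈ W := AffineSubspace.vsub_mem_direction hzL hp
    have heq : (inner ℝ (s - p) n : ℝ) = inner ℝ (s - z) n := by
      rw [show s - p = (s - z) + (z - p) by abel, inner_add_left,
        hnperp _ hzp, add_zero]
    rw [heq]
    calc |(inner ℝ (s - z) n : ℝ)| ≤ ‖s - z‖ * ‖n‖ := abs_real_inner_le_norm _ _
      _ = dist s z := by rw [hn, mul_one, dist_eq_norm]
      _ < ε := hsz
  set S : Set (EuclideanSpace ℝ (Fin d)) := ball x r ∩ thickening ε (L : Set (EuclideanSpace ℝ (Fin d))) with hS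
  set SK : Set (EuclideanSpace ℝ (Fin d)) := S ∩ K with hSK
  -- maximal ε-separated subset of SK
  set 𝒮 : Set (Set (EuclideanSpace ℝ (Fin d))) := {T | T ⊆ SK ∧ T.Pairwise fun u v => ε ≤ dist u v} with h𝒮
  obtain ⟨M, hM⟩ := zorn_subset 𝒮 (by
    intro c hc hchain
    refine ⟨⋃₀ c, ⟨Set.sUnion_subset fun T hT => (hc hT).1, ?_⟩,
      fun s hs => Set.subset_sUnion_of_mem hs⟩
    intro u hu v hv huv
    obtain ⟨T₁, hT₁, hu⟩ := hu
    obtain ⟨T₂, hT₂, hv⟩ := hv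
    rcases hchain.total hT₁ hT₂ with h | h
    · exact (hc hT₂).2 (h hu) hv huv
    · exact (hc hT₁).2 hu (h hv) huv)
  have hMSK : M ⊆ SK := hM.1.1
  have hMsep : M.Pairwise fun u v => ε ≤ dist u v := hM.1.2
  -- the cover
  have hcov : SK ⊆ ⋃ m ∈ M, ball m ε := by
    intro s hs
    by_contra hsno
    simp only [Set.mem_iUnion, mem_ball, not_exists, not_lt] at hsno
    have hins : insert s M ∈ 𝒮 := by
      refine ⟨Set.insert_subset hs hMSK, (haveI : Std.Symm (fun u v : EuclideanSpace ℝ (Fin d) => ε ≤ dist u v) :=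
        ⟨fun u v h => by rwa [dist_comm]⟩; hMsep.insert_of_symm fun m hm _ => hsno m hm)⟩
    have hsub := hM.2 hins (Set.subset_insert s M)
    have : ε ≤ dist s s := hsno s (hsub (Set.mem_insert s M))
    rw [dist_self] at this
    linarith
  -- apply the counting lemma
  obtain ⟨hfin, hcount⟩ := count_lemma d hd n p x hn hε hεr
    (fun m hm => (hMSK hm).1.1) (fun m hm => hslab m (hMSK hm).1.2) hMsep
  set N := M.ncard with hN
  -- convert the count to a real inequality
  have hcountR : (N:ℝ) * ((ε/2)^d * Vr) ≤ 3*ε * (3*r)^(d-1) := by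
    have hne : ENNReal.ofReal (3*ε) * ENNReal.ofReal (3*r) ^ (d-1) ≠ ⊤ := by
      exact ENNReal.mul_ne_top ENNReal.ofReal_ne_top
        (ENNReal.pow_ne_top ENNReal.ofReal_ne_top)
    have h2 := ENNReal.toReal_mono hne hcount
    rw [ENNReal.toReal_mul, ENNReal.toReal_mul, ENNReal.toReal_mul,
      ENNReal.toReal_pow, ENNReal.toReal_natCast,
      ENNReal.toReal_ofReal (by positivity),
      ENNReal.toReal_ofReal (by positivity : (0:ℝ) ≤ 3*ε),
      ENNReal.toReal_ofReal (by positivity : (0:ℝ) ≤ 3*r)] at h2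
    exact h2
  have harith := arith_lemma d hd N a b δ ε r Vr (Nat.cast_nonneg N) ha hb hVr hε hεr hδ hcountR
  -- measure estimates
  have hstep1 : μ S ≤ μ SK := by
    have hcover : S ⊆ SK ∪ (S ∩ Kᶜ) := by
      intro y hy
      by_cases hyK : y ∈ K
      · exact Or.inl ⟨hy, hyK⟩
      · exact Or.inr ⟨hy, hyK⟩
    have h0 : μ (S ∩ Kᶜ) = 0 := measure_mono_null inter_subset_right hsupp
    calc μ S ≤ μ (SK ∪ (S ∩ Kᶜ)) := measure_mono hcover
      _ ≤ μ SK + μ (S ∩ Kᶜ) := measure_union_le _ _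
      _ = μ SK := by rw [h0, add_zero]
  have hstep2 : μ SK ≤ ∑ m ∈ hfin.toFinset, μ (ball m ε) := by
    have hsub2 : SK ⊆ ⋃ m ∈ hfin.toFinset, ball m ε := by
      intro s hs
      obtain ⟨m, hm, h⟩ := Set.mem_iUnion₂.1 (hcov hs)
      exact Set.mem_iUnion₂.2 ⟨m, hfin.mem_toFinset.2 hm, h⟩
    exact (measure_mono hsub2).trans (measure_biUnion_finset_le _ _)
  have hstep3 : ∑ m ∈ hfin.toFinset, μ (ball m ε)
      ≤ (N : ℝ≥0∞) * ENNReal.ofReal (b * ε ^ δ) := by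
    have hbound : ∀ m ∈ hfin.toFinset, μ (ball m ε) ≤ ENNReal.ofReal (b * ε ^ δ) := by
      intro m hm
      have hmK : m ∈ K := (hMSK (hfin.mem_toFinset.1 hm)).2
      exact (hmeas m hmK ε hε (lt_of_le_of_lt hεr hrr₀)).2
    calc ∑ m ∈ hfin.toFinset, μ (ball m ε)
        ≤ hfin.toFinset.card • ENNReal.ofReal (b * ε ^ δ) :=
          Finset.sum_le_card_nsmul _ _ _ hbound
      _ = (N : ℝ≥0∞) * ENNReal.ofReal (b * ε ^ δ) := by
          rw [hN, Set.ncard_eq_toFinset_card M hfin, nsmul_eq_mul]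
  calc μ S ≤ (N : ℝ≥0∞) * ENNReal.ofReal (b * ε ^ δ) :=
        hstep1.trans (hstep2.trans hstep3)
    _ = ENNReal.ofReal ((N:ℝ) * (b * ε ^ δ)) := by
        rw [ENNReal.ofReal_mul (Nat.cast_nonneg N), ENNReal.ofReal_natCast]
    _ ≤ ENNReal.ofReal ((C * (ε/r)^α) * (a * r ^ δ)) := by
        apply ENNReal.ofReal_le_ofReal
        calc (N:ℝ) * (b * ε ^ δ) ≤ ((1 + 3 * 3^(d-1) * 2^d * b / (a * Vr)) * (ε/r)^α) * (a * r^δ) :=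
              harith
          _ = (C * (ε/r)^α) * (a * r ^ δ) := by rw [hC]
    _ = ENNReal.ofReal (C * (ε/r)^α) * ENNReal.ofReal (a * r ^ δ) := by
        rw [ENNReal.ofReal_mul (by positivity)]
    _ ≤ ENNReal.ofReal (C * (ε / r) ^ α) * μ (ball x r) :=
        mul_le_mul_right (hmeas x hx r hr hrr₀).1 _
end
end
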